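/- Let L be an n×n real symmetric matrix with L·1ₙ = 0, and suppose there is an orthogonal matrix Q with QᵀLQ = diag(0, λ₂, …, λₙ) where λ₂, …, λₙ are distinct and strictly positive. Let i ≠ j ∈ {1, …, n} be such that [Q]_{i,m} − [Q]_{j,m} ≠ 0 for every m ∈ {2, …, n}. If x ∈ ℝⁿ satisfies (e_i − e_j)ᵀ·L^m·x = 0 for every integer m ≥ 1, then x ∈ span{1ₙ}, i.e., all coordinates of x are equal. -/
import Mathlib

open Matrix Polynomial

/-- Vandermonde-type step: if `∑ k, c k * lam k ^ m = 0` for all `m ≥ 1`, the `lam`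
are distinct away from `0` and nonzero away from `0`, then `c k = 0` for `k ≠ 0`. -/
lemma vandermonde_step {n : ℕ} [NeZero n] (lam c : Fin n → ℝ) (hlam0 : lam 0 = 0)
    (hlamne : ∀ i : Fin n, i ≠ 0 → lam i ≠ 0)
    (hlamdist : ∀ i j : Fin n, i ≠ 0 → j ≠ 0 → i ≠ j → lam i ≠ lam j)
    (h : ∀ m : ℕ, 1 ≤ m → ∑ k : Fin n, c k * lam k ^ m = 0)
    (k : Fin n) (hk : k ≠ 0) : c k = 0 := by
  classical
  set s : Finset (Fin n) := (Finset.univ.erase 0).erase k with hs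
  set P : Polynomial ℝ := X * ∏ l ∈ s, (X - C (lam l)) with hP
  have hcoeff0 : P.coeff 0 = 0 := by
    rw [Polynomial.coeff_zero_eq_eval_zero]
    simp [hP]
  -- the sum ∑ t, c t * P.eval (lam t) equals 0 via the moment conditions
  have h1 : ∑ t : Fin n, c t * P.eval (lam t) = 0 := by
    have : ∀ t : Fin n, c t * P.eval (lam t)
        = ∑ m ∈ Finset.range (P.natDegree + 1), P.coeff m * (c t * lam t ^ m) := by
      intro t
      rw [Polynomial.eval_eq_sum_range, Finset.mul_sum]
      exact Finset.sum_congr rfl (fun m _ => by ring)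
    rw [Finset.sum_congr rfl (fun t _ => this t), Finset.sum_comm]
    apply Finset.sum_eq_zero
    intro m _
    rw [← Finset.mul_sum]
    rcases Nat.eq_zero_or_pos m with hm | hm
    · rw [hm, hcoeff0, zero_mul]
    · rw [h m hm, mul_zero]
  -- the sum equals c k * P.eval (lam k)
  have h2 : ∑ t : Fin n, c t * P.eval (lam t) = c k * P.eval (lam k) := by
    apply Finset.sum_eq_single k
    · intro t _ htk
      rcases eq_or_ne t 0 with ht0 | ht0
      · rw [ht0, hlam0]
        simp [hP]
      · have hts : t ∈ s := by
          simp [hs, Finset.mem_erase, htk, ht0]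
        have : P.eval (lam t) = 0 := by
          rw [hP]
          simp only [Polynomial.eval_mul, Polynomial.eval_prod, Polynomial.eval_sub,
            Polynomial.eval_X, Polynomial.eval_C]
          rw [Finset.prod_eq_zero hts (by ring)]
          ring
        rw [this, mul_zero]
    · intro hnk; exact absurd (Finset.mem_univ k) hnk
  have hPk : P.eval (lam k) ≠ 0 := by
    rw [hP]
    simp only [Polynomial.eval_mul, Polynomial.eval_prod, Polynomial.eval_sub,
      Polynomial.eval_X, Polynomial.eval_C]
    apply mul_ne_zero (hlamne k hk)
    apply Finset.prod_ne_zero_iff.mpr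
    intro l hl
    have hl' := Finset.mem_erase.mp hl
    have hl0 := (Finset.mem_erase.mp hl'.2).1
    exact sub_ne_zero_of_ne (hlamdist k l hk hl0 (Ne.symm hl'.1))
  have := h1 ▸ h2
  exact (mul_eq_zero.mp this.symm).resolve_right hPk

theorem stmt_10 {n : ℕ} [NeZero n]
    (L Q : Matrix (Fin n) (Fin n) ℝ) (hLsymm : L.IsSymm)
    (hL1 : L.mulVec (fun _ => (1:ℝ)) = 0)
    (hQ : Qᵀ * Q = 1)
    (lam : Fin n → ℝ) (hlam0 : lam 0 = 0)
    (hlampos : ∀ i : Fin n, i ≠ 0 → 0 < lam i)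
    (hlamdist : ∀ i j : Fin n, i ≠ 0 → j ≠ 0 → i ≠ j → lam i ≠ lam j)
    (hdiag : Qᵀ * L * Q = Matrix.diagonal lam)
    (i j : Fin n) (hij : i ≠ j)
    (hQij : ∀ m : Fin n, m ≠ 0 → Q i m - Q j m ≠ 0)
    (x : Fin n → ℝ)
    (hx : ∀ m : ℕ, 1 ≤ m → ((L ^ m).mulVec x) i - ((L ^ m).mulVec x) j = 0) :
    ∃ a : ℝ, x = fun _ => a := by
  classical
  have hQQ : Q * Qᵀ = 1 := mul_eq_one_comm.mp hQ
  have hL : L = Q * Matrix.diagonal lam * Qᵀ := by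
    calc L = (Q * Qᵀ) * L * (Q * Qᵀ) := by rw [hQQ, Matrix.one_mul, Matrix.mul_one]
    _ = Q * (Qᵀ * L * Q) * Qᵀ := by
        simp only [Matrix.mul_assoc]
    _ = Q * Matrix.diagonal lam * Qᵀ := by rw [hdiag]
  have hLpow : ∀ m : ℕ, L ^ m = Q * Matrix.diagonal (lam ^ m) * Qᵀ := by
    intro m
    induction m with
    | zero =>
        simp only [pow_zero]
        show (1 : Matrix (Fin n) (Fin n) ℝ) = Q * Matrix.diagonal (fun _ => (1:ℝ)) * Qᵀ
        rw [Matrix.diagonal_one, Matrix.mul_one, hQQ]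
    | succ m ih =>
        rw [pow_succ, ih, hL, pow_succ]
        calc Q * Matrix.diagonal (lam ^ m) * Qᵀ * (Q * Matrix.diagonal lam * Qᵀ)
            = Q * Matrix.diagonal (lam ^ m) * (Qᵀ * Q) * Matrix.diagonal lam * Qᵀ := by
              simp only [Matrix.mul_assoc]
          _ = Q * (Matrix.diagonal (lam ^ m) * Matrix.diagonal lam) * Qᵀ := by
              rw [hQ]; simp only [Matrix.mul_one, Matrix.mul_assoc]
          _ = Q * Matrix.diagonal (lam ^ m * lam) * Qᵀ := by rw [Matrix.diagonal_mul_diagonal]; rfl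
  set y : Fin n → ℝ := Qᵀ.mulVec x with hy
  set c : Fin n → ℝ := fun k => (Q i k - Q j k) * y k with hc
  -- the moment conditions
  have hmom : ∀ m : ℕ, 1 ≤ m → ∑ k : Fin n, c k * lam k ^ m = 0 := by
    intro m hm
    have hcomp : ∀ s : Fin n, ((L ^ m).mulVec x) s = ∑ k : Fin n, Q s k * (lam k ^ m * y k) := by
      intro s
      rw [hLpow m, ← Matrix.mulVec_mulVec, ← Matrix.mulVec_mulVec]
      have hdv : (Matrix.diagonal (lam ^ m)).mulVec y = fun k => lam k ^ m * y k := by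
        funext k
        rw [Matrix.mulVec_diagonal]
        simp
      rw [← hy, hdv]
      simp [Matrix.mulVec, dotProduct]
    have := hx m hm
    rw [hcomp i, hcomp j, ← Finset.sum_sub_distrib] at this
    rw [← this]
    apply Finset.sum_congr rfl
    intro k _
    simp only [hc]
    ring
  -- kill the nonzero-eigenvalue components of y
  have hyk : ∀ k : Fin n, k ≠ 0 → y k = 0 := by
    intro k hk
    have hck : c k = 0 :=
      vandermonde_step lam c hlam0 (fun t ht => (hlampos t ht).ne')
        hlamdist hmom k hk
    simp only [hc] at hck
    exact (mul_eq_zero.mp hck).resolve_left (hQij k hk)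
  -- x = Q.mulVec y, so x s = Q s 0 * y 0
  have hxQy : x = Q.mulVec y := by
    rw [hy, Matrix.mulVec_mulVec, hQQ, Matrix.one_mulVec]
  have hxs : ∀ s : Fin n, x s = Q s 0 * y 0 := by
    intro s
    rw [hxQy]
    simp only [Matrix.mulVec, dotProduct]
    rw [Finset.sum_eq_single 0]
    · intro t _ ht
      rw [hyk t ht, mul_zero]
    · intro h; exact absurd (Finset.mem_univ _) h
  -- column 0 of Q is constant, using L 1 = 0
  set w : Fin n → ℝ := Qᵀ.mulVec (fun _ => (1:ℝ)) with hw
  have hwk : ∀ k : Fin n, k ≠ 0 → w k = 0 := by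
    intro k hk
    have h1 : (Matrix.diagonal lam).mulVec w = 0 := by
      rw [hw, Matrix.mulVec_mulVec]
      have hDQ : Matrix.diagonal lam * Qᵀ = Qᵀ * L := by
        rw [← hdiag, Matrix.mul_assoc (Qᵀ * L), hQQ, Matrix.mul_one]
      rw [hDQ, ← Matrix.mulVec_mulVec, hL1, Matrix.mulVec_zero]
    have := congrFun h1 k
    rw [Matrix.mulVec_diagonal] at this
    have hlk := (hlampos k hk).ne'
    simpa [hlk] using (mul_eq_zero.mp this).resolve_left hlk
  have h1Qw : (fun _ => (1:ℝ)) = Q.mulVec w := by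
    rw [hw, Matrix.mulVec_mulVec, hQQ, Matrix.one_mulVec]
  have h1s : ∀ s : Fin n, (1:ℝ) = Q s 0 * w 0 := by
    intro s
    have := congrFun h1Qw s
    rw [this]
    simp only [Matrix.mulVec, dotProduct]
    rw [Finset.sum_eq_single 0]
    · intro t _ ht
      rw [hwk t ht, mul_zero]
    · intro h; exact absurd (Finset.mem_univ _) h
  have hw0 : w 0 ≠ 0 := by
    intro h0
    have := h1s 0
    rw [h0, mul_zero] at this
    exact one_ne_zero this
  refine ⟨y 0 / w 0, funext fun s => ?_⟩
  have hQs0 : Q s 0 = 1 / w 0 := by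
    field_simp
    exact (h1s s).symm
  rw [hxs s, hQs0]
  ring
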